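/- For n ≥ 2, the number of odd-part compositions of n which have no two consecutive parts equal to 1 except possibly at the beginning equals the number of compositions of n - 2 into parts 1 and 2 with no two consecutive 2's. -/

import Mathlib

def PA (γ : List ℕ) : Prop := ∀ i : ℕ, γ[i]? = some 1 → γ[i + 1]? = some 1 → i = 0
def PC (γ : List ℕ) : Prop := ∀ i : ℕ, γ[i]? = some 1 → γ[i + 1]? ≠ some 1
def PB (γ : List ℕ) : Prop := ∀ i : ℕ, γ[i]? = some 2 → γ[i + 1]? ≠ some 2

lemma PA_cons (x : ℕ) (δ : List ℕ) : PA (x :: δ) ↔ PC δ := by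
  constructor
  · intro h i h1 h2
    have := h (i+1) (by rw [List.getElem?_cons_succ]; exact h1)
      (by rw [List.getElem?_cons_succ]; exact h2)
    omega
  · intro h i h1 h2
    match i with
    | 0 => rfl
    | (j+1) =>
      rw [List.getElem?_cons_succ] at h1 h2
      exact absurd h2 (h j h1)

lemma PC_cons_one (δ : List ℕ) : PC (1 :: δ) ↔ δ[0]? ≠ some 1 ∧ PC δ := by
  constructor
  · intro h
    refine ⟨?_, fun i h1 h2 => h (i+1) ?_ ?_⟩
    · have := h 0 (by rw [List.getElem?_cons_zero])
      rwa [List.getElem?_cons_succ] at this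
    · rwa [List.getElem?_cons_succ]
    · rwa [List.getElem?_cons_succ]
  · rintro ⟨h0, h⟩ i h1
    match i with
    | 0 => rw [List.getElem?_cons_succ]; exact h0
    | (j+1) =>
      rw [List.getElem?_cons_succ] at h1 ⊢
      exact h j h1

lemma PC_cons_ne (x : ℕ) (δ : List ℕ) (hx : x ≠ 1) : PC (x :: δ) ↔ PC δ := by
  constructor
  · intro h i h1 h2
    exact h (i+1) (by rw [List.getElem?_cons_succ]; exact h1)
      (by rw [List.getElem?_cons_succ]; exact h2)
  · intro h i h1 h2
    match i with
    | 0 =>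
      rw [List.getElem?_cons_zero] at h1
      exact hx (by injection h1)
    | (j+1) =>
      rw [List.getElem?_cons_succ] at h1 h2
      exact h j h1 h2

lemma PB_cons_one (δ : List ℕ) : PB (1 :: δ) ↔ PB δ := by
  constructor
  · intro h i h1 h2
    exact h (i+1) (by rw [List.getElem?_cons_succ]; exact h1)
      (by rw [List.getElem?_cons_succ]; exact h2)
  · intro h i h1 h2
    match i with
    | 0 =>
      rw [List.getElem?_cons_zero] at h1
      exact absurd (by injection h1) (by norm_num)
    | (j+1) =>
      rw [List.getElem?_cons_succ] at h1 h2
      exact h j h1 h2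

lemma PB_cons_two (δ : List ℕ) : PB (2 :: δ) ↔ δ[0]? ≠ some 2 ∧ PB δ := by
  constructor
  · intro h
    refine ⟨?_, fun i h1 h2 => h (i+1) ?_ ?_⟩
    · have := h 0 (by rw [List.getElem?_cons_zero])
      rwa [List.getElem?_cons_succ] at this
    · rwa [List.getElem?_cons_succ]
    · rwa [List.getElem?_cons_succ]
  · rintro ⟨h0, h⟩ i h1
    match i with
    | 0 => rw [List.getElem?_cons_succ]; exact h0
    | (j+1) =>
      rw [List.getElem?_cons_succ] at h1 ⊢
      exact h j h1

lemma PC_imp_PA (γ : List ℕ) (h : PC γ) : PA γ := fun i h1 h2 => absurd h2 (h i h1)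

lemma PB_nil : PB [] := by intro i h1; rw [List.getElem?_nil] at h1; exact absurd h1 (by simp)
lemma PC_nil : PC [] := by intro i h1; rw [List.getElem?_nil] at h1; exact absurd h1 (by simp)
lemma PB_single (x : ℕ) : PB [x] := by
  intro i h1 h2
  match i with
  | 0 => rw [List.getElem?_cons_succ, List.getElem?_nil] at h2; exact absurd h2 (by simp)
  | (j+1) => rw [List.getElem?_cons_succ, List.getElem?_nil] at h1; exact absurd h1 (by simp)

def A (n : ℕ) : Set (List ℕ) := {γ | γ.sum = n ∧ (∀ x ∈ γ, Odd x) ∧ PA γ}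
def C (n : ℕ) : Set (List ℕ) := {γ | γ.sum = n ∧ (∀ x ∈ γ, Odd x) ∧ PC γ}
def C' (n : ℕ) : Set (List ℕ) := {γ | γ ∈ C n ∧ γ[0]? ≠ some 1}
def B (m : ℕ) : Set (List ℕ) := {γ | γ.sum = m ∧ (∀ x ∈ γ, x = 1 ∨ x = 2) ∧ PB γ}
def B'' (m : ℕ) : Set (List ℕ) := {γ | γ ∈ B m ∧ γ[0]? ≠ some 2}

lemma sum_pos_ne_nil {γ : List ℕ} {n : ℕ} (h : γ.sum = n + 1) : γ ≠ [] := by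
  intro he; rw [he] at h; simp at h

lemma A_eq (n : ℕ) : A (n+1) = ((1 :: ·) '' C n) ∪ C' (n+1) := by
  ext γ
  constructor
  · rintro ⟨hs, ho, hp⟩
    match γ, sum_pos_ne_nil hs with
    | x :: δ, _ =>
      rw [List.sum_cons] at hs
      by_cases hx : x = 1
      · subst hx
        exact Or.inl ⟨δ, ⟨by omega, fun y hy => ho y (by simp [hy]),
          (PA_cons 1 δ).mp hp⟩, rfl⟩
      · refine Or.inr ⟨⟨by rw [List.sum_cons]; omega, ho, ?_⟩, ?_⟩
        · exact (PC_cons_ne x δ hx).mpr ((PA_cons x δ).mp hp)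
        · rw [List.getElem?_cons_zero]; intro h; exact hx (by injection h)
  · rintro (⟨δ, ⟨hs, ho, hp⟩, rfl⟩ | ⟨⟨hs, ho, hp⟩, _⟩)
    · exact ⟨by rw [List.sum_cons, hs]; omega, fun x hx => by rcases List.mem_cons.mp hx with rfl | hx'; exacts [odd_one, ho x hx'],
        (PA_cons 1 δ).mpr hp⟩
    · exact ⟨hs, ho, PC_imp_PA γ hp⟩

lemma C_eq (n : ℕ) : C (n+1) = ((1 :: ·) '' C' n) ∪ C' (n+1) := by
  ext γ
  constructor
  · rintro ⟨hs, ho, hp⟩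
    match γ, sum_pos_ne_nil hs with
    | x :: δ, _ =>
      rw [List.sum_cons] at hs
      by_cases hx : x = 1
      · subst hx
        have h1 := (PC_cons_one δ).mp hp
        exact Or.inl ⟨δ, ⟨⟨by omega, fun y hy => ho y (by simp [hy]), h1.2⟩, h1.1⟩, rfl⟩
      · refine Or.inr ⟨⟨by rw [List.sum_cons]; omega, ho, hp⟩, ?_⟩
        rw [List.getElem?_cons_zero]; intro h; exact hx (by injection h)
  · rintro (⟨δ, ⟨⟨hs, ho, hp⟩, h0⟩, rfl⟩ | ⟨⟨hs, ho, hp⟩, _⟩)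
    · exact ⟨by rw [List.sum_cons, hs]; omega, fun x hx => by rcases List.mem_cons.mp hx with rfl | hx'; exacts [odd_one, ho x hx'],
        (PC_cons_one δ).mpr ⟨h0, hp⟩⟩
    · exact ⟨hs, ho, hp⟩

def fshift : List ℕ → List ℕ
  | [] => []
  | x :: t => (x + 2) :: t

lemma fshift_injective : Function.Injective fshift := by
  intro a b h
  match a, b with
  | [], [] => rfl
  | [], x :: t => simp [fshift] at h
  | x :: t, [] => simp [fshift] at h
  | x :: t, y :: s =>
    simp only [fshift, List.cons.injEq] at h
    simp [h.2]; omega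

lemma C'_eq (n : ℕ) : C' (n+3) = fshift '' A (n+1) := by
  ext γ
  constructor
  · rintro ⟨⟨hs, ho, hp⟩, h0⟩
    match γ, sum_pos_ne_nil hs with
    | x :: δ, _ =>
      rw [List.sum_cons] at hs
      rw [List.getElem?_cons_zero] at h0
      have hx1 : x ≠ 1 := fun h => h0 (by rw [h])
      have hxo : Odd x := ho x (by simp)
      have hx3 : 3 ≤ x := by rcases hxo with ⟨k, hk⟩; omega
      refine ⟨(x - 2) :: δ, ⟨by rw [List.sum_cons]; omega, ?_, ?_⟩, ?_⟩
      · intro y hy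
        rcases List.mem_cons.mp hy with rfl | hy'
        · rcases hxo with ⟨k, hk⟩; exact ⟨k - 1, by omega⟩
        · exact ho y (by simp [hy'])
      · exact (PA_cons _ δ).mpr ((PC_cons_ne x δ hx1).mp hp)
      · show (x - 2 + 2) :: δ = x :: δ
        congr 1; omega
  · rintro ⟨γ', ⟨hs, ho, hp⟩, rfl⟩
    match γ', sum_pos_ne_nil hs with
    | y :: δ, _ =>
      rw [List.sum_cons] at hs
      have hyo : Odd y := ho y (by simp)
      have hy1 : 1 ≤ y := hyo.pos
      refine ⟨⟨by show (y+2) + δ.sum = n + 3; omega, ?_, ?_⟩, ?_⟩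
      · intro x hx
        rcases List.mem_cons.mp hx with rfl | hx'
        · rcases hyo with ⟨k, hk⟩; exact ⟨k + 1, by omega⟩
        · exact ho x (by simp [hx'])
      · exact (PC_cons_ne (y+2) δ (by omega)).mpr ((PA_cons y δ).mp hp)
      · show ((y+2) :: δ)[0]? ≠ some 1
        rw [List.getElem?_cons_zero]; intro h; have := Option.some.inj h; omega

lemma B_eq (m : ℕ) : B (m+2) = ((1 :: ·) '' B (m+1)) ∪ ((2 :: ·) '' B'' m) := by
  ext γ
  constructor
  · rintro ⟨hs, ho, hp⟩
    match γ, sum_pos_ne_nil hs with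
    | x :: δ, _ =>
      rw [List.sum_cons] at hs
      rcases ho x (by simp) with rfl | rfl
      · exact Or.inl ⟨δ, ⟨by omega, fun y hy => ho y (by simp [hy]),
          (PB_cons_one δ).mp hp⟩, rfl⟩
      · have h2 := (PB_cons_two δ).mp hp
        exact Or.inr ⟨δ, ⟨⟨by omega, fun y hy => ho y (by simp [hy]), h2.2⟩, h2.1⟩, rfl⟩
  · rintro (⟨δ, ⟨hs, ho, hp⟩, rfl⟩ | ⟨δ, ⟨⟨hs, ho, hp⟩, h0⟩, rfl⟩)
    · exact ⟨by rw [List.sum_cons, hs]; omega, fun x hx => by rcases List.mem_cons.mp hx with rfl | hx'; exacts [Or.inl rfl, ho x hx'],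
        (PB_cons_one δ).mpr hp⟩
    · exact ⟨by rw [List.sum_cons, hs]; omega, fun x hx => by rcases List.mem_cons.mp hx with rfl | hx'; exacts [Or.inr rfl, ho x hx'],
        (PB_cons_two δ).mpr ⟨h0, hp⟩⟩

lemma B''_eq (m : ℕ) : B'' (m+1) = (1 :: ·) '' B m := by
  ext γ
  constructor
  · rintro ⟨⟨hs, ho, hp⟩, h0⟩
    match γ, sum_pos_ne_nil hs with
    | x :: δ, _ =>
      rw [List.sum_cons] at hs
      rw [List.getElem?_cons_zero] at h0
      rcases ho x (by simp) with rfl | rfl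
      · exact ⟨δ, ⟨by omega, fun y hy => ho y (by simp [hy]), (PB_cons_one δ).mp hp⟩, rfl⟩
      · exact absurd rfl h0
  · rintro ⟨δ, ⟨hs, ho, hp⟩, rfl⟩
    refine ⟨⟨by rw [List.sum_cons, hs]; omega, fun x hx => by rcases List.mem_cons.mp hx with rfl | hx'; exacts [Or.inl rfl, ho x hx'],
      (PB_cons_one δ).mpr hp⟩, ?_⟩
    rw [List.getElem?_cons_zero]; intro h; have := Option.some.inj h; omega

lemma finite_pos (n : ℕ) : {γ : List ℕ | γ.sum = n ∧ ∀ x ∈ γ, 0 < x}.Finite := by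
  rw [← Set.finite_coe_iff]
  exact Finite.of_injective
    (fun γ => (⟨γ.1, fun hi => γ.2.2 _ hi, γ.2.1⟩ : Composition n))
    (fun γ δ h => Subtype.ext (congrArg Composition.blocks h))

lemma finite_A (n : ℕ) : (A n).Finite :=
  (finite_pos n).subset (fun _ hγ => ⟨hγ.1, fun x hx => (hγ.2.1 x hx).pos⟩)
lemma finite_C (n : ℕ) : (C n).Finite :=
  (finite_pos n).subset (fun _ hγ => ⟨hγ.1, fun x hx => (hγ.2.1 x hx).pos⟩)
lemma finite_C' (n : ℕ) : (C' n).Finite := (finite_C n).subset (fun _ hγ => hγ.1)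
lemma finite_B (m : ℕ) : (B m).Finite :=
  (finite_pos m).subset (fun _ hγ => ⟨hγ.1, fun x hx => by rcases hγ.2.1 x hx with h | h <;> omega⟩)
lemma finite_B'' (m : ℕ) : (B'' m).Finite := (finite_B m).subset (fun _ hγ => hγ.1)

noncomputable def a (n : ℕ) : ℕ := (A n).ncard
noncomputable def c (n : ℕ) : ℕ := (C n).ncard
noncomputable def c' (n : ℕ) : ℕ := (C' n).ncard
noncomputable def b (m : ℕ) : ℕ := (B m).ncard
noncomputable def b'' (m : ℕ) : ℕ := (B'' m).ncard

lemma disj_one {T S : Set (List ℕ)} (hS : ∀ γ ∈ S, γ[0]? ≠ some 1) :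
    Disjoint ((1 :: ·) '' T) S := by
  rw [Set.disjoint_left]
  rintro γ ⟨δ, _, rfl⟩ hγ
  exact hS _ hγ (by rw [List.getElem?_cons_zero])

lemma ra (n : ℕ) : a (n+1) = c n + c' (n+1) := by
  unfold a c c'
  rw [A_eq n, Set.ncard_union_eq (disj_one (fun γ hγ => hγ.2))
    ((finite_C n).image _) (finite_C' (n+1)),
    Set.ncard_image_of_injective _ (List.cons_injective)]

lemma rc (n : ℕ) : c (n+1) = c' n + c' (n+1) := by
  unfold c c'
  rw [C_eq n, Set.ncard_union_eq (disj_one (fun γ hγ => hγ.2))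
    ((finite_C' n).image _) (finite_C' (n+1)),
    Set.ncard_image_of_injective _ (List.cons_injective)]

lemma rc' (n : ℕ) : c' (n+3) = a (n+1) := by
  unfold c' a
  rw [C'_eq n, Set.ncard_image_of_injective _ fshift_injective]

lemma rb (m : ℕ) : b (m+2) = b (m+1) + b'' m := by
  unfold b b''
  have hd : Disjoint ((1 :: ·) '' B (m+1)) ((2 :: ·) '' B'' m) := by
    rw [Set.disjoint_left]
    rintro γ ⟨δ, _, rfl⟩ ⟨ε, _, h⟩
    exact absurd (List.head_eq_of_cons_eq h) (by norm_num)
  rw [B_eq m, Set.ncard_union_eq hd ((finite_B (m+1)).image _) ((finite_B'' m).image _),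
    Set.ncard_image_of_injective _ (List.cons_injective),
    Set.ncard_image_of_injective _ (List.cons_injective)]

lemma rb'' (m : ℕ) : b'' (m+1) = b m := by
  unfold b b''
  rw [B''_eq m, Set.ncard_image_of_injective _ (List.cons_injective)]

lemma sum_zero_one_two {δ : List ℕ} (ho : ∀ x ∈ δ, x = 1 ∨ x = 2) (hs : δ.sum = 0) :
    δ = [] := by
  match δ with
  | [] => rfl
  | x :: ε =>
    rw [List.sum_cons] at hs
    rcases ho x (by simp) with rfl | rfl <;> omega

lemma c_zero : c 0 = 1 := by
  have : C 0 = {[]} := by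
    ext γ
    constructor
    · rintro ⟨hs, ho, _⟩
      match γ with
      | [] => rfl
      | x :: δ =>
        rw [List.sum_cons] at hs
        have := (ho x (by simp)).pos
        omega
    · rintro rfl
      exact ⟨rfl, by simp, PC_nil⟩
  rw [c, this, Set.ncard_singleton]

lemma c'_zero : c' 0 = 1 := by
  have : C' 0 = {[]} := by
    ext γ
    constructor
    · rintro ⟨⟨hs, ho, _⟩, _⟩
      match γ with
      | [] => rfl
      | x :: δ =>
        rw [List.sum_cons] at hs
        have := (ho x (by simp)).pos
        omega
    · rintro rfl
      exact ⟨⟨rfl, by simp, PC_nil⟩, by rw [List.getElem?_nil]; simp⟩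
  rw [c', this, Set.ncard_singleton]

lemma c'_one : c' 1 = 0 := by
  have : C' 1 = ∅ := by
    rw [Set.eq_empty_iff_forall_notMem]
    rintro γ ⟨⟨hs, ho, _⟩, h0⟩
    match γ, sum_pos_ne_nil hs with
    | x :: δ, _ =>
      rw [List.sum_cons] at hs
      have hx := (ho x (by simp)).pos
      have : x = 1 := by omega
      subst this
      exact h0 (by rw [List.getElem?_cons_zero])
  rw [c', this, Set.ncard_empty]

lemma c'_two : c' 2 = 0 := by
  have : C' 2 = ∅ := by
    rw [Set.eq_empty_iff_forall_notMem]
    rintro γ ⟨⟨hs, ho, _⟩, h0⟩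
    match γ, sum_pos_ne_nil hs with
    | x :: δ, _ =>
      rw [List.sum_cons] at hs
      rcases ho x (by simp) with ⟨k, hk⟩
      have : x = 1 := by omega
      subst this
      exact h0 (by rw [List.getElem?_cons_zero])
  rw [c', this, Set.ncard_empty]

lemma b_zero : b 0 = 1 := by
  have : B 0 = {[]} := by
    ext γ
    constructor
    · rintro ⟨hs, ho, _⟩
      exact sum_zero_one_two ho hs
    · rintro rfl
      exact ⟨rfl, by simp, PB_nil⟩
  rw [b, this, Set.ncard_singleton]

lemma b''_zero : b'' 0 = 1 := by
  have : B'' 0 = {[]} := by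
    ext γ
    constructor
    · rintro ⟨⟨hs, ho, _⟩, _⟩
      exact sum_zero_one_two ho hs
    · rintro rfl
      exact ⟨⟨rfl, by simp, PB_nil⟩, by rw [List.getElem?_nil]; simp⟩
  rw [b'', this, Set.ncard_singleton]

lemma b_one : b 1 = 1 := by
  have : B 1 = {[1]} := by
    ext γ
    constructor
    · rintro ⟨hs, ho, _⟩
      match γ, sum_pos_ne_nil hs with
      | x :: δ, _ =>
        rw [List.sum_cons] at hs
        have hx1 : x = 1 := by rcases ho x (by simp) with rfl | rfl <;> omega
        subst hx1
        have : δ = [] := sum_zero_one_two (fun y hy => ho y (by simp [hy])) (by omega)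
        rw [this]
        rfl
    · rintro rfl
      refine ⟨by simp, ?_, PB_single 1⟩
      intro x hx
      rw [List.mem_singleton] at hx
      exact Or.inl hx
  rw [b, this, Set.ncard_singleton]

lemma a_one : a 1 = 1 := by have h : a 1 = c 0 + c' 1 := ra 0; have := c_zero; have := c'_one; omega
lemma c_one : c 1 = 1 := by have h : c 1 = c' 0 + c' 1 := rc 0; have := c'_zero; have := c'_one; omega
lemma a_two : a 2 = 1 := by have h : a 2 = c 1 + c' 2 := ra 1; have := c_one; have := c'_two; omega
lemma c_two : c 2 = 0 := by have h : c 2 = c' 1 + c' 2 := rc 1; have := c'_one; have := c'_two; omega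
lemma c'_three : c' 3 = 1 := by have h : c' 3 = a 1 := rc' 0; have := a_one; omega
lemma a_three : a 3 = 1 := by have h : a 3 = c 2 + c' 3 := ra 2; have := c_two; have := c'_three; omega
lemma c_three : c 3 = 1 := by have h : c 3 = c' 2 + c' 3 := rc 2; have := c'_two; have := c'_three; omega
lemma c'_four : c' 4 = 1 := by have h : c' 4 = a 2 := rc' 1; have := a_two; omega
lemma a_four : a 4 = 2 := by have h : a 4 = c 3 + c' 4 := ra 3; have := c_three; have := c'_four; omega
lemma c_four : c 4 = 2 := by have h : c 4 = c' 3 + c' 4 := rc 3; have := c'_three; have := c'_four; omega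
lemma c'_five : c' 5 = 1 := by have h : c' 5 = a 3 := rc' 2; have := a_three; omega
lemma a_five : a 5 = 3 := by have h : a 5 = c 4 + c' 5 := ra 4; have := c_four; have := c'_five; omega
lemma b_two : b 2 = 2 := by have h : b 2 = b 1 + b'' 0 := rb 0; have := b_one; have := b''_zero; omega

lemma SA (n : ℕ) : a (n+5) = a (n+1) + a (n+2) + a (n+3) := by
  have h1 : a (n+5) = c (n+4) + c' (n+5) := ra (n+4)
  have h2 : c (n+4) = c' (n+3) + c' (n+4) := rc (n+3)
  have h3 : c' (n+3) = a (n+1) := rc' n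
  have h4 : c' (n+4) = a (n+2) := rc' (n+1)
  have h5 : c' (n+5) = a (n+3) := rc' (n+2)
  omega

lemma a_six : a 6 = 4 := by
  have h : a 6 = a 2 + a 3 + a 4 := SA 1
  have := a_two; have := a_three; have := a_four
  omega

lemma recA : ∀ n, a (n+5) = a (n+4) + a (n+2) := by
  intro n
  induction n using Nat.strong_induction_on with
  | _ n ih =>
    match n, ih with
    | 0, _ =>
      show a 5 = a 4 + a 2
      have := a_five; have := a_four; have := a_two; omega
    | 1, _ =>
      show a 6 = a 5 + a 3
      have := a_six; have := a_five; have := a_three; omega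
    | (k+2), ih =>
      have h1 : a (k+7) = a (k+3) + a (k+4) + a (k+5) := SA (k+2)
      have h2 : a (k+6) = a (k+2) + a (k+3) + a (k+4) := SA (k+1)
      have h3 : a (k+5) = a (k+4) + a (k+2) := ih k (by omega)
      show a (k+7) = a (k+6) + a (k+4)
      omega

lemma recB (m : ℕ) : b (m+3) = b (m+2) + b m := by
  have h1 : b (m+3) = b (m+2) + b'' (m+1) := rb (m+1)
  have h2 : b'' (m+1) = b m := rb'' m
  omega

lemma key : ∀ n, a (n+2) = b n := by
  intro n
  induction n using Nat.strong_induction_on with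
  | _ n ih =>
    match n, ih with
    | 0, _ => show a 2 = b 0; have := a_two; have := b_zero; omega
    | 1, _ => show a 3 = b 1; have := a_three; have := b_one; omega
    | 2, _ => show a 4 = b 2; have := a_four; have := b_two; omega
    | (k+3), ih =>
      have h1 : a (k+5) = a (k+4) + a (k+2) := recA k
      have h2 : a (k+4) = b (k+2) := ih (k+2) (by omega)
      have h3 : a (k+2) = b k := ih k (by omega)
      have h4 : b (k+3) = b (k+2) + b k := recB k
      show a (k+5) = b (k+3)
      omega

/-- For `n ≥ 2`, the number of odd-part compositions of `n` with no two
consecutive parts equal to `1` except possibly at the beginning equals the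
number of compositions of `n - 2` into parts `1` and `2` with no two
consecutive `2`'s. -/
theorem odd_comps_eq_onetwo_comps (n : ℕ) (hn : 2 ≤ n) :
    {γ : List ℕ | γ.sum = n ∧ (∀ x ∈ γ, Odd x) ∧
        ∀ i : ℕ, γ[i]? = some 1 → γ[i + 1]? = some 1 → i = 0}.ncard
      = {γ : List ℕ | γ.sum = n - 2 ∧ (∀ x ∈ γ, x = 1 ∨ x = 2) ∧
        ∀ i : ℕ, γ[i]? = some 2 → γ[i + 1]? ≠ some 2}.ncard := by
  obtain ⟨k, rfl⟩ : ∃ k, n = k + 2 := ⟨n - 2, by omega⟩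
  have h : k + 2 - 2 = k := by omega
  rw [h]
  exact key k
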